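/- arXiv:1901.03858 — 2 statements merged into one kernel-verified Lean document; each statement's English description precedes it below -/
import Mathlib

section
/- For probability measures μ, ν with bounded support on the cone of positive invertible operators, δ_T(μ, ν) ≤ d_∞^W(μ, ν), where δ_T(μ,ν) = inf{r ≥ 0 : e^{-r}.ν ≤ μ ≤ e^r.ν} and d_∞^W is the ∞-Wasserstein distance with respect to the Thompson metric. -/
set_option synthInstance.maxHeartbeats 1000000
set_option maxHeartbeats 1000000

open MeasureTheory Real

variable {E : Type*} [NormedAddCommGroup E] [InnerProductSpace ℂ E] [CompleteSpace E]

/-- The Loewner order on bounded operators: `A ≤ B` iff `B - A` is positive. -/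
def opLE (A B : E →L[ℂ] E) : Prop := (B - A).IsPositive

/-- The set of positive invertible operators. -/
def posInv : Set (E →L[ℂ] E) := {A | A.IsPositive ∧ IsUnit A}

/-- The Thompson metric on positive invertible operators:
`d_T(A,B) = inf {r ≥ 0 : e^{-r} B ≤ A ≤ e^r B}`. -/
noncomputable def thompsonDist (A B : E →L[ℂ] E) : ℝ :=
  sInf {r : ℝ | 0 ≤ r ∧ opLE (exp (-r) • B) A ∧ opLE A (exp r • B)}

variable [MeasurableSpace (E →L[ℂ] E)]

/-- The stochastic order on measures: `μ ≤ ν` iff `μ U ≤ ν U` for every upper closed set. -/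
def stochLE (μ ν : Measure (E →L[ℂ] E)) : Prop :=
  ∀ U : Set (E →L[ℂ] E), IsClosed U → (∀ ⦃x⦄, x ∈ U → ∀ ⦃y⦄, opLE x y → y ∈ U) → μ U ≤ ν U

/-- The push-forward of `μ` by scalar multiplication with `α`. -/
noncomputable def scaleM (α : ℝ) (μ : Measure (E →L[ℂ] E)) : Measure (E →L[ℂ] E) :=
  μ.map (α • ·)

/-- The set of `r ≥ 0` with `e^{-r}.ν ≤ μ ≤ e^r.ν` in the stochastic order. -/
def thompsonSet (μ ν : Measure (E →L[ℂ] E)) : Set ℝ :=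
  {r : ℝ | 0 ≤ r ∧ stochLE (scaleM (exp (-r)) ν) μ ∧ stochLE μ (scaleM (exp r) ν)}

/-- The Thompson-metric-like function `δ_T` on measures. -/
noncomputable def deltaT (μ ν : Measure (E →L[ℂ] E)) : ℝ := sInf (thompsonSet μ ν)

/-- The (topological) support of a measure on the product space. -/
def msupport (pp : Measure ((E →L[ℂ] E) × (E →L[ℂ] E))) : Set ((E →L[ℂ] E) × (E →L[ℂ] E)) :=
  {p | ∀ U : Set ((E →L[ℂ] E) × (E →L[ℂ] E)), IsOpen U → p ∈ U → 0 < pp U}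

/-- The set of `s ≥ 0` admitting a coupling of `μ, ν` whose support has Thompson diameter
at most `s`; its infimum is the `∞`-Wasserstein distance `d_∞^W`. -/
def wassersteinSet (μ ν : Measure (E →L[ℂ] E)) : Set ℝ :=
  {s : ℝ | 0 ≤ s ∧ ∃ pp : Measure ((E →L[ℂ] E) × (E →L[ℂ] E)), IsProbabilityMeasure pp ∧
    pp.map Prod.fst = μ ∧ pp.map Prod.snd = ν ∧
    ∀ p ∈ msupport pp, thompsonDist p.1 p.2 ≤ s}

/-- The `∞`-Wasserstein distance with respect to the Thompson metric. -/
noncomputable def wassersteinInf (μ ν : Measure (E →L[ℂ] E)) : ℝ :=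
  sInf (wassersteinSet μ ν)

/-! ### Auxiliary lemmas -/

section Aux

omit [MeasurableSpace (E →L[ℂ] E)]

/-- Cauchy–Schwarz inequality for a positive operator. -/
lemma aux_pos_cs {B : E →L[ℂ] E} (hB : B.IsPositive) (x y : E) :
    ‖(inner ℂ (B x) y : ℂ)‖ * ‖(inner ℂ (B y) x : ℂ)‖ ≤
      RCLike.re (inner ℂ (B x) x : ℂ) * RCLike.re (inner ℂ (B y) y : ℂ) := by
  have hsymm := hB.1
  let c : PreInnerProductSpace.Core ℂ E :=
    { inner := fun u v => inner ℂ (B u) v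
      conj_inner_symm := fun u v => by
        rw [inner_conj_symm]
        exact (hsymm u v).symm
      re_inner_nonneg := fun u => hB.re_inner_nonneg_left u
      add_left := fun u v w => by simp [inner_add_left]
      smul_left := fun u v r => by simp [inner_smul_left, mul_comm] }
  exact @InnerProductSpace.Core.inner_mul_inner_self_le ℂ E _ _ _ c x y

/-- A positive invertible operator is bounded below. -/
lemma aux_pos_lower {B : E →L[ℂ] E} (hB : B.IsPositive) (hU : IsUnit B) :
    ∃ c : ℝ, 0 < c ∧ ∀ v : E, c * ‖v‖ ^ 2 ≤ RCLike.re (inner ℂ (B v) v : ℂ) := by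
  rcases subsingleton_or_nontrivial E with h | h
  · exact ⟨1, one_pos, fun v => by simp [Subsingleton.elim v 0]⟩
  obtain ⟨u, hu⟩ := hU
  set Bi : E →L[ℂ] E := ↑u⁻¹ with hBi
  have hBBi : ∀ v, B (Bi v) = v := by
    intro v
    have : (B * Bi) v = v := by
      rw [← hu, Units.mul_inv]
      simp
    simpa [ContinuousLinearMap.mul_apply] using this
  have hBine : Bi ≠ 0 := by
    intro h0
    obtain ⟨v, hv⟩ := exists_ne (0 : E)
    apply hv
    rw [← hBBi v, h0]
    simp
  have hBi_pos : 0 < ‖Bi‖ := norm_pos_iff.mpr hBine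
  refine ⟨‖Bi‖⁻¹, inv_pos.mpr hBi_pos, fun v => ?_⟩
  have key := aux_pos_cs hB (Bi v) v
  have h1 : (inner ℂ (B (Bi v)) v : ℂ) = inner ℂ v v := by rw [hBBi]
  have h2 : ‖(inner ℂ (B v) (Bi v) : ℂ)‖ = ‖v‖ ^ 2 := by
    have : (inner ℂ (B v) (Bi v) : ℂ) = starRingEnd ℂ (inner ℂ (B (Bi v)) v) := by
      rw [← inner_conj_symm]
      congr 1
      exact ((ContinuousLinearMap.isSelfAdjoint_iff_isSymmetric).mp hB.isSelfAdjoint (Bi v) v).symm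
    rw [this, RCLike.norm_conj, h1, inner_self_eq_norm_sq_to_K]
    simp [norm_pow]
  have h3 : ‖(inner ℂ (B (Bi v)) v : ℂ)‖ = ‖v‖ ^ 2 := by
    rw [h1, inner_self_eq_norm_sq_to_K]; simp [norm_pow]
  have h4 : RCLike.re (inner ℂ (B (Bi v)) (Bi v) : ℂ) ≤ ‖Bi‖ * ‖v‖ ^ 2 := by
    calc RCLike.re (inner ℂ (B (Bi v)) (Bi v) : ℂ) = RCLike.re (inner ℂ v (Bi v) : ℂ) := by rw [hBBi]
    _ ≤ ‖v‖ * ‖Bi v‖ := re_inner_le_norm _ _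
    _ ≤ ‖v‖ * (‖Bi‖ * ‖v‖) := by
        gcongr
        exact Bi.le_opNorm v
    _ = ‖Bi‖ * ‖v‖ ^ 2 := by ring
  rw [h3, h2] at key
  have h5 : ‖v‖ ^ 2 * ‖v‖ ^ 2 ≤ ‖Bi‖ * ‖v‖ ^ 2 * RCLike.re (inner ℂ (B v) v : ℂ) := by
    calc ‖v‖ ^ 2 * ‖v‖ ^ 2
        ≤ RCLike.re (inner ℂ (B (Bi v)) (Bi v) : ℂ) * RCLike.re (inner ℂ (B v) v : ℂ) := key
    _ ≤ ‖Bi‖ * ‖v‖ ^ 2 * RCLike.re (inner ℂ (B v) v : ℂ) := by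
        gcongr
        exact hB.re_inner_nonneg_left v
  rcases eq_or_lt_of_le (norm_nonneg v) with hv0 | hv0
  · have : (v : E) = 0 := norm_eq_zero.mp (hv0.symm)
    simp [this]
  · have hv2 : (0 : ℝ) < ‖v‖ ^ 2 := by positivity
    rw [inv_mul_le_iff₀ hBi_pos]
    nlinarith [h5]

lemma aux_isSelfAdjoint_smul_real {c : ℝ} {T : E →L[ℂ] E} (hT : IsSelfAdjoint T) :
    IsSelfAdjoint (c • T) := by
  rw [IsSelfAdjoint, star_smul, star_trivial, hT.star_eq]

lemma aux_re_inner_smul_real (c : ℝ) (T : E →L[ℂ] E) (x : E) :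
    RCLike.re (inner ℂ ((c • T) x) x : ℂ) = c * RCLike.re (inner ℂ (T x) x : ℂ) := by
  rw [ContinuousLinearMap.smul_apply, RCLike.real_smul_eq_coe_smul (K := ℂ), inner_smul_left,
    RCLike.conj_ofReal, RCLike.re_ofReal_mul]

lemma aux_isPositive_smul_nonneg {c : ℝ} (hc : 0 ≤ c) {T : E →L[ℂ] E} (hT : T.IsPositive) :
    (c • T).IsPositive := by
  refine ContinuousLinearMap.isPositive_def'.mpr ⟨aux_isSelfAdjoint_smul_real hT.isSelfAdjoint, fun x => ?_⟩
  have h := aux_re_inner_smul_real c T x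
  rw [ContinuousLinearMap.reApplyInnerSelf, h]
  exact mul_nonneg hc (hT.2 x)

lemma aux_re_inner_le_norm_sq (T : E →L[ℂ] E) (x : E) :
    RCLike.re (inner ℂ (T x) x : ℂ) ≤ ‖T‖ * ‖x‖ ^ 2 := by
  calc RCLike.re (inner ℂ (T x) x : ℂ) ≤ ‖T x‖ * ‖x‖ := re_inner_le_norm _ _
  _ ≤ ‖T‖ * ‖x‖ * ‖x‖ := by gcongr; exact T.le_opNorm x
  _ = ‖T‖ * ‖x‖ ^ 2 := by ring

lemma aux_opLE_add_smul {A B : E →L[ℂ] E} {a b : ℝ} (h : opLE A (a • B)) (hB : B.IsPositive)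
    (hab : a ≤ b) : opLE A (b • B) := by
  have hrw : b • B - A = (a • B - A) + (b - a) • B := by
    rw [sub_smul]; abel
  rw [opLE, hrw]
  exact h.add (aux_isPositive_smul_nonneg (by linarith) hB)

lemma aux_opLE_smul_le {A B : E →L[ℂ] E} {a b : ℝ} (h : opLE (a • B) A) (hB : B.IsPositive)
    (hab : b ≤ a) : opLE (b • B) A := by
  have hrw : A - b • B = (A - a • B) + (a - b) • B := by
    rw [sub_smul]; abel
  rw [opLE, hrw]
  exact h.add (aux_isPositive_smul_nonneg (by linarith) hB)

/-- There is some `r` witnessing comparability of two positive invertible operators. -/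
lemma aux_exists_opLE_pair {A B : E →L[ℂ] E} (hA : A.IsPositive) (hAu : IsUnit A)
    (hB : B.IsPositive) (hBu : IsUnit B) :
    ∃ r : ℝ, 0 ≤ r ∧ opLE (exp (-r) • B) A ∧ opLE A (exp r • B) := by
  obtain ⟨cA, hcA, hA'⟩ := aux_pos_lower hA hAu
  obtain ⟨cB, hcB, hB'⟩ := aux_pos_lower hB hBu
  set r : ℝ := max 0 (max (log ((‖A‖ + 1) / cB)) (log ((‖B‖ + 1) / cA))) with hr
  have hr0 : 0 ≤ r := le_max_left _ _
  have hr1 : (‖A‖ + 1) / cB ≤ exp r := by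
    calc (‖A‖ + 1) / cB = exp (log ((‖A‖ + 1) / cB)) := by
          rw [exp_log]; positivity
    _ ≤ exp r := exp_le_exp.mpr (le_trans (le_max_left _ _) (le_max_right _ _))
  have hr2 : (‖B‖ + 1) / cA ≤ exp r := by
    calc (‖B‖ + 1) / cA = exp (log ((‖B‖ + 1) / cA)) := by
          rw [exp_log]; positivity
    _ ≤ exp r := exp_le_exp.mpr (le_trans (le_max_right _ _) (le_max_right _ _))
  have hA1 : ‖A‖ + 1 ≤ exp r * cB := by
    rw [div_le_iff₀ hcB] at hr1; linarith
  have hB1 : ‖B‖ + 1 ≤ exp r * cA := by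
    rw [div_le_iff₀ hcA] at hr2; linarith
  have hexpneg : exp (-r) * (‖B‖ + 1) ≤ cA := by
    rw [exp_neg]
    have h0 := exp_pos r
    rw [inv_mul_le_iff₀ h0]
    nlinarith
  refine ⟨r, hr0, ?_, ?_⟩
  · refine ContinuousLinearMap.isPositive_def'.mpr ⟨hA.isSelfAdjoint.sub (aux_isSelfAdjoint_smul_real hB.isSelfAdjoint), fun x => ?_⟩
    rw [ContinuousLinearMap.reApplyInnerSelf, ContinuousLinearMap.sub_apply, inner_sub_left,
      map_sub, aux_re_inner_smul_real]
    have k1 := aux_re_inner_le_norm_sq B x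
    have k2 := hA' x
    have k3 : exp (-r) * RCLike.re (inner ℂ (B x) x : ℂ) ≤ exp (-r) * (‖B‖ * ‖x‖ ^ 2) :=
      mul_le_mul_of_nonneg_left k1 (exp_pos _).le
    have k4 : exp (-r) * (‖B‖ * ‖x‖ ^ 2) ≤ cA * ‖x‖ ^ 2 := by
      have hx2 : (0 : ℝ) ≤ ‖x‖ ^ 2 := by positivity
      have hBn : (0 : ℝ) ≤ ‖B‖ := norm_nonneg _
      nlinarith [mul_le_mul_of_nonneg_right hexpneg hx2, (exp_pos (-r)).le]
    linarith
  · refine ContinuousLinearMap.isPositive_def'.mpr ⟨(aux_isSelfAdjoint_smul_real hB.isSelfAdjoint).sub hA.isSelfAdjoint, fun x => ?_⟩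
    rw [ContinuousLinearMap.reApplyInnerSelf, ContinuousLinearMap.sub_apply, inner_sub_left,
      map_sub, aux_re_inner_smul_real]
    have k1 := aux_re_inner_le_norm_sq A x
    have k2 := hB' x
    have hx2 : (0 : ℝ) ≤ ‖x‖ ^ 2 := by positivity
    have k3 : exp r * (cB * ‖x‖ ^ 2) ≤ exp r * RCLike.re (inner ℂ (B x) x : ℂ) :=
      mul_le_mul_of_nonneg_left k2 (exp_pos _).le
    nlinarith [mul_le_mul_of_nonneg_right hA1 hx2]

/-- The set of positive operators is closed. -/
lemma aux_isClosed_isPositive : IsClosed {T : E →L[ℂ] E | T.IsPositive} := by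
  have h1 : IsClosed {T : E →L[ℂ] E | IsSelfAdjoint T} :=
    isClosed_eq (ContinuousLinearMap.adjoint : (E →L[ℂ] E) ≃ₗᵢ⋆[ℂ] (E →L[ℂ] E)).continuous
      continuous_id
  have h2 : IsClosed {T : E →L[ℂ] E | ∀ x, 0 ≤ T.reApplyInnerSelf x} := by
    have hEq : {T : E →L[ℂ] E | ∀ x, 0 ≤ T.reApplyInnerSelf x} =
        ⋂ x : E, {T : E →L[ℂ] E | 0 ≤ T.reApplyInnerSelf x} := by ext; simp [Set.mem_iInter]
    rw [hEq]
    refine isClosed_iInter fun x => ?_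
    have hap : Continuous (fun T : E →L[ℂ] E => T x) := (ContinuousLinearMap.apply ℂ E x).continuous
    exact isClosed_le continuous_const
      (RCLike.continuous_re.comp (continuous_inner.comp (hap.prodMk continuous_const)))
  have hP : {T : E →L[ℂ] E | T.IsPositive} = {T : E →L[ℂ] E | IsSelfAdjoint T} ∩
      {T : E →L[ℂ] E | ∀ x, 0 ≤ T.reApplyInnerSelf x} := by
    ext T; exact ContinuousLinearMap.isPositive_def'
  rw [hP]
  exact h1.inter h2

/-- The defining set of the Thompson distance is closed. -/
lemma aux_isClosed_tset (A B : E →L[ℂ] E) :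
    IsClosed {r : ℝ | 0 ≤ r ∧ opLE (exp (-r) • B) A ∧ opLE A (exp r • B)} := by
  have hf : Continuous (fun r : ℝ => A - exp (-r) • B) :=
    continuous_const.sub ((Real.continuous_exp.comp continuous_neg).smul continuous_const)
  have hg : Continuous (fun r : ℝ => exp r • B - A) :=
    (Real.continuous_exp.smul continuous_const).sub continuous_const
  have hEq : {r : ℝ | 0 ≤ r ∧ opLE (exp (-r) • B) A ∧ opLE A (exp r • B)} =
      {r : ℝ | 0 ≤ r} ∩ ((fun r : ℝ => A - exp (-r) • B) ⁻¹' {T | T.IsPositive}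
        ∩ (fun r : ℝ => exp r • B - A) ⁻¹' {T | T.IsPositive}) := by
    ext r
    simp only [Set.mem_setOf_eq, Set.mem_inter_iff, Set.mem_preimage, opLE, and_assoc]
  rw [hEq]
  exact (isClosed_Ici).inter ((aux_isClosed_isPositive.preimage hf).inter
    (aux_isClosed_isPositive.preimage hg))

/-- For positive invertible operators, the Thompson distance is attained. -/
lemma aux_thompsonDist_mem {A B : E →L[ℂ] E} (hA : A ∈ posInv) (hB : B ∈ posInv) :
    0 ≤ thompsonDist A B ∧ opLE (exp (-(thompsonDist A B)) • B) A ∧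
      opLE A (exp (thompsonDist A B) • B) := by
  obtain ⟨r, hr⟩ := aux_exists_opLE_pair hA.1 hA.2 hB.1 hB.2
  exact (aux_isClosed_tset A B).csInf_mem ⟨r, hr⟩ ⟨0, fun t ht => ht.1⟩

end Aux

/-- The complement of the support of a measure is null (second countable space). -/
lemma aux_msupport_compl [BorelSpace (E →L[ℂ] E)]
    [SecondCountableTopology (E →L[ℂ] E)]
    (pp : Measure ((E →L[ℂ] E) × (E →L[ℂ] E))) : pp (msupport pp)ᶜ = 0 := by
  have hEq : (msupport pp)ᶜ = ⋃₀ {U : Set ((E →L[ℂ] E) × (E →L[ℂ] E)) | IsOpen U ∧ pp U = 0} := by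
    ext p
    simp only [Set.mem_compl_iff, msupport, Set.mem_setOf_eq, Set.mem_sUnion, not_forall]
    constructor
    · rintro ⟨U, hUo, hpU, hU0⟩
      exact ⟨U, ⟨hUo, by simpa [pos_iff_ne_zero] using hU0⟩, hpU⟩
    · rintro ⟨U, ⟨hUo, hU0⟩, hpU⟩
      exact ⟨U, hUo, hpU, by simp [hU0]⟩
  obtain ⟨T, hTc, hTsub, hTU⟩ := TopologicalSpace.isOpen_sUnion_countable
    {U : Set ((E →L[ℂ] E) × (E →L[ℂ] E)) | IsOpen U ∧ pp U = 0} (fun U hU => hU.1)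
  rw [hEq, ← hTU]
  exact (measure_sUnion_null_iff hTc).mpr (fun U hU => (hTsub hU).2)

/-- For boundedly supported probability measures on the cone of positive invertible
operators, `δ_T(μ, ν) ≤ d_∞^W(μ, ν)`. -/
theorem deltaT_le_wassersteinInf [BorelSpace (E →L[ℂ] E)]
    [SecondCountableTopology (E →L[ℂ] E)]
    (μ ν : Measure (E →L[ℂ] E)) [IsProbabilityMeasure μ] [IsProbabilityMeasure ν]
    (hμ : μ posInv = 1) (hν : ν posInv = 1)
    (hth : (thompsonSet μ ν).Nonempty) (hW : (wassersteinSet μ ν).Nonempty) :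
    deltaT μ ν ≤ wassersteinInf μ ν := by
  refine le_csInf hW ?_
  rintro s ⟨hs0, pp, hprob, hfst, hsnd, hsupp⟩
  haveI := hprob
  -- measurability of `posInv`
  have hposMeas : MeasurableSet (posInv : Set (E →L[ℂ] E)) :=
    (aux_isClosed_isPositive.measurableSet).inter (Units.isOpen.measurableSet)
  -- the good set
  set G : Set ((E →L[ℂ] E) × (E →L[ℂ] E)) :=
    msupport pp ∩ ((posInv : Set (E →L[ℂ] E)) ×ˢ (posInv : Set (E →L[ℂ] E))) with hG
  have hfst_null : pp (Prod.fst ⁻¹' (posInv : Set (E →L[ℂ] E))ᶜ) = 0 := by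
    have : pp (Prod.fst ⁻¹' (posInv : Set (E →L[ℂ] E))ᶜ) = μ (posInv : Set (E →L[ℂ] E))ᶜ := by
      rw [← hfst, Measure.map_apply measurable_fst hposMeas.compl]
    rw [this, measure_compl hposMeas (measure_ne_top μ _), hμ, measure_univ, tsub_self]
  have hsnd_null : pp (Prod.snd ⁻¹' (posInv : Set (E →L[ℂ] E))ᶜ) = 0 := by
    have : pp (Prod.snd ⁻¹' (posInv : Set (E →L[ℂ] E))ᶜ) = ν (posInv : Set (E →L[ℂ] E))ᶜ := by
      rw [← hsnd, Measure.map_apply measurable_snd hposMeas.compl]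
    rw [this, measure_compl hposMeas (measure_ne_top ν _), hν, measure_univ, tsub_self]
  have hGc : pp Gᶜ = 0 := by
    have hsub : Gᶜ ⊆ (msupport pp)ᶜ ∪ (Prod.fst ⁻¹' (posInv : Set (E →L[ℂ] E))ᶜ
        ∪ Prod.snd ⁻¹' (posInv : Set (E →L[ℂ] E))ᶜ) := by
      intro p hp
      rw [hG, Set.compl_inter] at hp
      rcases hp with hp | hp
      · exact Or.inl hp
      · have : ¬(p.1 ∈ posInv ∧ p.2 ∈ posInv) := hp
        by_cases h1 : p.1 ∈ posInv
        · exact Or.inr (Or.inr (fun h2 => this ⟨h1, h2⟩))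
        · exact Or.inr (Or.inl h1)
    refine le_antisymm ?_ (zero_le ..)
    calc pp Gᶜ ≤ pp ((msupport pp)ᶜ ∪ (Prod.fst ⁻¹' (posInv : Set (E →L[ℂ] E))ᶜ
        ∪ Prod.snd ⁻¹' (posInv : Set (E →L[ℂ] E))ᶜ)) := measure_mono hsub
    _ ≤ pp (msupport pp)ᶜ + (pp (Prod.fst ⁻¹' (posInv : Set (E →L[ℂ] E))ᶜ)
        + pp (Prod.snd ⁻¹' (posInv : Set (E →L[ℂ] E))ᶜ)) :=
      le_trans (measure_union_le _ _) (by gcongr; exact measure_union_le _ _)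
    _ = 0 := by rw [aux_msupport_compl pp, hfst_null, hsnd_null]; simp
  -- the key pointwise comparison on the good set
  have key : ∀ p : (E →L[ℂ] E) × (E →L[ℂ] E), p ∈ G →
      opLE (exp (-s) • p.2) p.1 ∧ opLE p.1 (exp s • p.2) := by
    rintro ⟨x, y⟩ ⟨hpsupp, hxy⟩
    obtain ⟨hd0, hd1, hd2⟩ := aux_thompsonDist_mem hxy.1 hxy.2
    have hle : thompsonDist x y ≤ s := hsupp (x, y) hpsupp
    constructor
    · exact aux_opLE_smul_le hd1 hxy.2.1 (exp_le_exp.mpr (neg_le_neg hle))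
    · exact aux_opLE_add_smul hd2 hxy.2.1 (exp_le_exp.mpr hle)
  have hsmul_meas : ∀ c : ℝ, Measurable (fun T : E →L[ℂ] E => c • T) :=
    fun c => (continuous_const_smul c).measurable
  have hmem : s ∈ thompsonSet μ ν := by
    refine ⟨hs0, ?_, ?_⟩
    · -- `scaleM (exp (-s)) ν ≤ μ`
      intro U hUc hUu
      have hUm := hUc.measurableSet
      have hV : MeasurableSet ((fun T : E →L[ℂ] E => exp (-s) • T) ⁻¹' U) :=
        hsmul_meas (exp (-s)) hUm
      rw [scaleM, Measure.map_apply (hsmul_meas (exp (-s))) hUm, ← hsnd,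
        Measure.map_apply measurable_snd hV, ← hfst, Measure.map_apply measurable_fst hUm]
      have hsub : Prod.snd ⁻¹' ((fun T : E →L[ℂ] E => exp (-s) • T) ⁻¹' U)
          ⊆ (Prod.fst ⁻¹' U) ∪ Gᶜ := by
        intro p hp
        by_cases hpG : p ∈ G
        · exact Or.inl (hUu hp (key p hpG).1)
        · exact Or.inr hpG
      calc pp _ ≤ pp ((Prod.fst ⁻¹' U) ∪ Gᶜ) := measure_mono hsub
      _ ≤ pp (Prod.fst ⁻¹' U) + pp Gᶜ := measure_union_le _ _
      _ = pp (Prod.fst ⁻¹' U) := by rw [hGc, add_zero]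
    · -- `μ ≤ scaleM (exp s) ν`
      intro U hUc hUu
      have hUm := hUc.measurableSet
      have hV : MeasurableSet ((fun T : E →L[ℂ] E => exp s • T) ⁻¹' U) :=
        hsmul_meas (exp s) hUm
      rw [scaleM, Measure.map_apply (hsmul_meas (exp s)) hUm, ← hsnd,
        Measure.map_apply measurable_snd hV, ← hfst, Measure.map_apply measurable_fst hUm]
      have hsub : Prod.fst ⁻¹' U
          ⊆ (Prod.snd ⁻¹' ((fun T : E →L[ℂ] E => exp s • T) ⁻¹' U)) ∪ Gᶜ := by
        intro p hp
        by_cases hpG : p ∈ G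
        · exact Or.inl (hUu hp (key p hpG).2)
        · exact Or.inr hpG
      calc pp _ ≤ pp ((Prod.snd ⁻¹' ((fun T : E →L[ℂ] E => exp s • T) ⁻¹' U)) ∪ Gᶜ) :=
          measure_mono hsub
      _ ≤ pp (Prod.snd ⁻¹' ((fun T : E →L[ℂ] E => exp s • T) ⁻¹' U)) + pp Gᶜ :=
          measure_union_le _ _
      _ = pp (Prod.snd ⁻¹' ((fun T : E →L[ℂ] E => exp s • T) ⁻¹' U)) := by rw [hGc, add_zero]
  exact csInf_le ⟨0, fun r hr => hr.1⟩ hmem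
end

section
/- For Hermitian positive definite N×N matrices, if a map Φ from matrices to matrices is unital positive linear, then Φ(A #_α B) ≤ Φ(A) #_α Φ(B) for all positive definite A, B and α ∈ [0,1], where #_α is the weighted geometric mean. -/
open MeasureTheory Set
open scoped ComplexOrder

open scoped ComplexOrder


/-- The positive square root `A^{1/2}` via the continuous functional calculus. -/
noncomputable def rsqrt {n : Type*} [Fintype n] [DecidableEq n]
    (A : Matrix n n ℂ) : Matrix n n ℂ :=
  cfc Real.sqrt A

/-- The inverse square root `A^{-1/2}` via the continuous functional calculus. -/
noncomputable def risqrt {n : Type*} [Fintype n] [DecidableEq n]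
    (A : Matrix n n ℂ) : Matrix n n ℂ :=
  cfc (fun x : ℝ => (Real.sqrt x)⁻¹) A

/-- The `α`-weighted geometric mean `A #_α B = A^{1/2}(A^{-1/2} B A^{-1/2})^α A^{1/2}`. -/
noncomputable def wgm {n : Type*} [Fintype n] [DecidableEq n]
    (α : ℝ) (A B : Matrix n n ℂ) : Matrix n n ℂ :=
  rsqrt A * cfc (fun x : ℝ => x ^ α) (risqrt A * B * risqrt A) * rsqrt A


namespace AndoAux


variable {α : ℝ}

/-- integrability of the kernel -/
lemma kernel_integrable (h0 : 0 < α) (h1 : α < 1) {t : ℝ} (ht : 0 < t) :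
    IntegrableOn (fun l : ℝ => l ^ (α - 1) * (t / (t + l))) (Ioi 0) := by
  have hmeas : ∀ s : Set ℝ, MeasurableSet s → s ⊆ Ioi 0 →
      AEStronglyMeasurable (fun l : ℝ => l ^ (α - 1) * (t / (t + l)))
        (volume.restrict s) := by
    intro s hs hsub
    refine ContinuousOn.aestronglyMeasurable ?_ hs
    refine ContinuousOn.mul ?_ ?_
    · exact fun x hx => (Real.continuousAt_rpow_const x (α-1)
        (Or.inl (ne_of_gt (hsub hx)))).continuousWithinAt
    · refine continuousOn_const.div (continuousOn_const.add continuousOn_id) ?_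
      intro x hx
      have hx0 : (0:ℝ) < x := hsub hx
      positivity
  have hIoc : IntegrableOn (fun l : ℝ => l ^ (α - 1) * (t / (t + l))) (Ioc 0 1) := by
    have hbase : IntegrableOn (fun l : ℝ => l ^ (α - 1)) (Ioc 0 1) := by
      have := intervalIntegral.intervalIntegrable_rpow' (a := 0) (b := 1)
        (r := α - 1) (by linarith)
      rwa [intervalIntegrable_iff_integrableOn_Ioc_of_le (by norm_num)] at this
    refine Integrable.mono' hbase (hmeas _ measurableSet_Ioc Ioc_subset_Ioi_self) ?_
    refine (ae_restrict_iff' measurableSet_Ioc).2 (Filter.Eventually.of_forall ?_)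
    intro x hx
    have hx0 : 0 < x := hx.1
    have h1' : 0 ≤ x ^ (α - 1) := Real.rpow_nonneg hx0.le _
    have h2' : t / (t + x) ≤ 1 := by
      rw [div_le_one (by positivity)]; linarith
    have h3' : 0 ≤ t / (t + x) := by positivity
    rw [Real.norm_eq_abs, abs_of_nonneg (by positivity)]
    calc x ^ (α - 1) * (t / (t + x)) ≤ x ^ (α - 1) * 1 := by
          exact mul_le_mul_of_nonneg_left h2' h1'
      _ = x ^ (α - 1) := mul_one _
  have hIoi : IntegrableOn (fun l : ℝ => l ^ (α - 1) * (t / (t + l))) (Ioi 1) := by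
    have hbase : IntegrableOn (fun l : ℝ => t * l ^ (α - 2)) (Ioi 1) :=
      (integrableOn_Ioi_rpow_of_lt (by linarith) one_pos).const_mul t
    refine Integrable.mono' hbase (hmeas _ measurableSet_Ioi
      (fun x hx => mem_Ioi.2 (lt_trans one_pos hx))) ?_
    refine (ae_restrict_iff' measurableSet_Ioi).2 (Filter.Eventually.of_forall ?_)
    intro x hx
    have hx1 : (1:ℝ) < x := hx
    have hx0 : 0 < x := lt_trans one_pos hx1
    rw [Real.norm_eq_abs, abs_of_nonneg (by positivity)]
    have key : t / (t + x) ≤ t / x := by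
      apply div_le_div_of_nonneg_left ht.le hx0; linarith
    calc x ^ (α - 1) * (t / (t + x)) ≤ x ^ (α - 1) * (t / x) :=
          mul_le_mul_of_nonneg_left key (Real.rpow_nonneg hx0.le _)
      _ = t * (x ^ (α - 1) * x⁻¹) := by ring
      _ = t * x ^ (α - 2) := by
          rw [← Real.rpow_neg_one x, ← Real.rpow_add hx0]
          rw [show α - 1 + -1 = α - 2 by ring]
  have : Ioc (0:ℝ) 1 ∪ Ioi 1 = Ioi 0 := Ioc_union_Ioi_eq_Ioi (by norm_num)
  rw [← this]
  exact hIoc.union hIoi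

noncomputable def Ibase (α : ℝ) : ℝ := ∫ l in Ioi (0:ℝ), l ^ (α - 1) * (1 / (1 + l))

lemma Ibase_pos (h0 : 0 < α) (h1 : α < 1) : 0 < Ibase α := by
  rw [Ibase]
  rw [setIntegral_pos_iff_support_of_nonneg_ae]
  · have hsub : Ioi (0:ℝ) ⊆ Function.support (fun l : ℝ => l ^ (α - 1) * (1 / (1 + l))) ∩ Ioi 0 := by
      intro x hx
      have hx0 : (0:ℝ) < x := hx
      refine ⟨?_, hx⟩
      have : 0 < x ^ (α - 1) * (1 / (1 + x)) := by
        have := Real.rpow_pos_of_pos hx0 (α - 1); positivity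
      exact ne_of_gt this
    calc (0:ENNReal) < volume (Ioi (0:ℝ)) := by simp
      _ ≤ _ := measure_mono hsub
  · refine (ae_restrict_iff' measurableSet_Ioi).2 (Filter.Eventually.of_forall ?_)
    intro x hx
    have hx0 : (0:ℝ) < x := hx
    have := Real.rpow_nonneg hx0.le (α - 1)
    positivity
  · exact kernel_integrable h0 h1 one_pos

lemma kernel_integral (h0 : 0 < α) (h1 : α < 1) {t : ℝ} (ht : 0 < t) :
    ∫ l in Ioi (0:ℝ), l ^ (α - 1) * (t / (t + l)) = t ^ α * Ibase α := by
  have key := MeasureTheory.integral_comp_mul_left_Ioi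
    (fun l : ℝ => l ^ (α - 1) * (t / (t + l))) 0 ht
  rw [mul_zero] at key
  have congr1 : ∫ x in Ioi (0:ℝ), (t * x) ^ (α - 1) * (t / (t + t * x))
      = ∫ x in Ioi (0:ℝ), t ^ (α - 1) * (x ^ (α - 1) * (1 / (1 + x))) := by
    refine setIntegral_congr_fun measurableSet_Ioi ?_
    intro x hx
    have hx0 : (0:ℝ) < x := hx
    have h1x : (0:ℝ) < 1 + x := by linarith
    simp only
    rw [Real.mul_rpow ht.le hx0.le]
    have ht2 : t + t * x = t * (1 + x) := by ring
    rw [ht2]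
    rw [div_mul_eq_div_div, div_self ht.ne']
    ring
  rw [congr1] at key
  rw [integral_const_mul] at key
  -- key : t^(α-1) * Ibase α = t⁻¹ • ∫ ... = t⁻¹ • (our integral)
  have hI : (∫ l in Ioi (0:ℝ), l ^ (α - 1) * (t / (t + l)))
      = t * (t ^ (α - 1) * Ibase α) := by
    rw [smul_eq_mul] at key
    rw [Ibase, key, ← mul_assoc, mul_inv_cancel₀ ht.ne', one_mul]
  rw [hI, ← mul_assoc, ← Real.rpow_one_add' ht.le (by intro h; linarith [h] : (1:ℝ) + (α-1) ≠ 0)]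
  norm_num

/-- The scalar core: integral representation argument. -/
lemma scalar_core {ι κ : Type*} [Fintype ι] [Fintype κ] {α : ℝ} (h0 : 0 < α) (h1 : α < 1)
    (μ : ι → ℝ) (ν : κ → ℝ) (c : ι → ℝ) (d : κ → ℝ)
    (hμ : ∀ i, 0 < μ i) (hν : ∀ j, 0 < ν j)
    (hc : ∀ i, 0 ≤ c i) (hd : ∀ j, 0 ≤ d j)
    (hsum : ∑ i, c i = ∑ j, d j)
    (hkey : ∀ l : ℝ, 0 < l → ∑ j, d j * (ν j + l)⁻¹ ≤ ∑ i, c i * (μ i + l)⁻¹) :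
    ∑ i, c i * μ i ^ α ≤ ∑ j, d j * ν j ^ α := by
  -- pointwise key in the form with x/(x+l)
  have key2 : ∀ l : ℝ, 0 < l →
      ∑ i, c i * (μ i / (μ i + l)) ≤ ∑ j, d j * (ν j / (ν j + l)) := by
    intro l hl
    have e1 : ∀ i, c i * (μ i / (μ i + l)) = c i - l * (c i * (μ i + l)⁻¹) := by
      intro i
      have h : (0:ℝ) < μ i + l := by have := hμ i; linarith
      field_simp
      ring
    have e2 : ∀ j, d j * (ν j / (ν j + l)) = d j - l * (d j * (ν j + l)⁻¹) := by
      intro j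
      have h : (0:ℝ) < ν j + l := by have := hν j; linarith
      field_simp
      ring
    simp only [e1, e2, Finset.sum_sub_distrib, ← Finset.mul_sum]
    rw [hsum]
    have := hkey l hl
    nlinarith [hkey l hl]
  -- integrable families
  have hintc : ∀ i : ι, MeasureTheory.IntegrableOn
      (fun l : ℝ => c i * (l ^ (α - 1) * (μ i / (μ i + l)))) (Ioi 0) :=
    fun i => (kernel_integrable h0 h1 (hμ i)).const_mul _
  have hintd : ∀ j : κ, MeasureTheory.IntegrableOn
      (fun l : ℝ => d j * (l ^ (α - 1) * (ν j / (ν j + l)))) (Ioi 0) :=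
    fun j => (kernel_integrable h0 h1 (hν j)).const_mul _
  have hIpos := Ibase_pos h0 h1
  -- rewrite each side as integrals
  have lhs_eq : ∑ i, c i * μ i ^ α
      = (Ibase α)⁻¹ * ∫ l in Ioi (0:ℝ), ∑ i, c i * (l ^ (α - 1) * (μ i / (μ i + l))) := by
    rw [MeasureTheory.integral_finset_sum _ (fun i _ => hintc i)]
    rw [Finset.mul_sum]
    congr 1
    ext i
    rw [MeasureTheory.integral_const_mul, kernel_integral h0 h1 (hμ i)]
    field_simp
  have rhs_eq : ∑ j, d j * ν j ^ α
      = (Ibase α)⁻¹ * ∫ l in Ioi (0:ℝ), ∑ j, d j * (l ^ (α - 1) * (ν j / (ν j + l))) := by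
    rw [MeasureTheory.integral_finset_sum _ (fun j _ => hintd j)]
    rw [Finset.mul_sum]
    congr 1
    ext j
    rw [MeasureTheory.integral_const_mul, kernel_integral h0 h1 (hν j)]
    field_simp
  rw [lhs_eq, rhs_eq]
  apply mul_le_mul_of_nonneg_left _ (inv_nonneg.2 hIpos.le)
  apply MeasureTheory.setIntegral_mono_on
  · exact MeasureTheory.integrable_finset_sum _ (fun i _ => hintc i)
  · exact MeasureTheory.integrable_finset_sum _ (fun j _ => hintd j)
  · exact measurableSet_Ioi
  · intro l hl
    have hl0 : (0:ℝ) < l := hl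
    have hrp : (0:ℝ) ≤ l ^ (α - 1) := Real.rpow_nonneg hl0.le _
    calc ∑ i, c i * (l ^ (α - 1) * (μ i / (μ i + l)))
        = l ^ (α - 1) * ∑ i, c i * (μ i / (μ i + l)) := by
          rw [Finset.mul_sum]; congr 1; ext i; ring
      _ ≤ l ^ (α - 1) * ∑ j, d j * (ν j / (ν j + l)) :=
          mul_le_mul_of_nonneg_left (key2 l hl0) hrp
      _ = ∑ j, d j * (l ^ (α - 1) * (ν j / (ν j + l))) := by
          rw [Finset.mul_sum]; congr 1; ext j; ring



section MatrixSide

variable {n : Type*} [Fintype n] [DecidableEq n] {A : Matrix n n ℂ}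

open Matrix

/-- sesquilinear form associated to a pair of vectors, as a linear map in the matrix. -/
noncomputable def sesq (w v : n → ℂ) : Matrix n n ℂ →ₗ[ℂ] ℂ where
  toFun M := star w ⬝ᵥ (M *ᵥ v)
  map_add' M M' := by simp [Matrix.add_mulVec, dotProduct_add]
  map_smul' c M := by simp [Matrix.smul_mulVec, dotProduct_smul]

lemma sesq_apply (w v : n → ℂ) (M : Matrix n n ℂ) : sesq w v M = star w ⬝ᵥ (M *ᵥ v) := rfl

lemma sesq_one (v : n → ℂ) : sesq v v 1 = star v ⬝ᵥ v := by
  simp [sesq_apply]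

/-- `⟨Gw, Mv⟩ = ⟨w, GMv⟩` for Hermitian `G`. -/
lemma sesq_mulVec_left {G : Matrix n n ℂ} (hG : G.IsHermitian) (w v : n → ℂ)
    (M : Matrix n n ℂ) : sesq (G *ᵥ w) v M = sesq w v (G * M) := by
  simp only [sesq_apply, Matrix.star_mulVec, hG.eq]
  rw [← Matrix.dotProduct_mulVec, Matrix.mulVec_mulVec]

lemma sesq_mulVec_right (w v : n → ℂ) (G M : Matrix n n ℂ) :
    sesq w (G *ᵥ v) M = sesq w v (M * G) := by
  simp only [sesq_apply, Matrix.mulVec_mulVec]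

lemma sesq_conj {G : Matrix n n ℂ} (hG : G.IsHermitian) (w : n → ℂ)
    (M : Matrix n n ℂ) : sesq (G *ᵥ w) (G *ᵥ w) M = sesq w w (G * M * G) := by
  rw [sesq_mulVec_left hG, sesq_mulVec_right]

lemma sesq_star {M : Matrix n n ℂ} (hM : M.IsHermitian) (v : n → ℂ) :
    star (sesq v v M) = sesq v v M := by
  conv_lhs => rw [sesq_apply, Matrix.star_dotProduct, star_star]
  rw [sesq_apply, Matrix.star_mulVec, ← Matrix.dotProduct_mulVec, hM.eq]

lemma sesq_im {M : Matrix n n ℂ} (hM : M.IsHermitian) (v : n → ℂ) :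
    (sesq v v M).im = 0 := by
  have := sesq_star hM v
  rw [Complex.star_def, Complex.conj_eq_iff_im] at this
  exact this

lemma psd_sesq_nonneg {M : Matrix n n ℂ} (hM : M.PosSemidef) (v : n → ℂ) :
    0 ≤ (sesq v v M).re := by
  have := hM.dotProduct_mulVec_nonneg v
  rw [Complex.le_def] at this
  simpa [sesq_apply] using this.1

lemma posSemidef_of_sesq {M : Matrix n n ℂ} (hM : M.IsHermitian)
    (h : ∀ v, 0 ≤ (sesq v v M).re) : M.PosSemidef := by
  refine Matrix.PosSemidef.of_dotProduct_mulVec_nonneg hM fun v => ?_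
  rw [Complex.le_def]
  constructor
  · simpa [sesq_apply] using h v
  · simp [(sesq_im hM v).symm, sesq_apply]

/-- Cauchy–Schwarz for the dot product over ℂ. -/
lemma dot_cs (a b : n → ℂ) :
    ‖star a ⬝ᵥ b‖ ^ 2 ≤ (star a ⬝ᵥ a).re * (star b ⬝ᵥ b).re := by
  let a' : EuclideanSpace ℂ n := (WithLp.equiv 2 _).symm a
  let b' : EuclideanSpace ℂ n := (WithLp.equiv 2 _).symm b
  have hab : (inner ℂ a' b' : ℂ) = star a ⬝ᵥ b := by
    simp [a', b', PiLp.inner_apply, dotProduct, RCLike.inner_apply]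
    exact Finset.sum_congr rfl fun _ _ => mul_comm _ _
  have haa : (inner ℂ a' a' : ℂ) = star a ⬝ᵥ a := by
    simp [a', PiLp.inner_apply, dotProduct, RCLike.inner_apply, -inner_self_eq_norm_sq_to_K]
    exact Finset.sum_congr rfl fun _ _ => mul_comm _ _
  have hbb : (inner ℂ b' b' : ℂ) = star b ⬝ᵥ b := by
    simp [b', PiLp.inner_apply, dotProduct, RCLike.inner_apply, -inner_self_eq_norm_sq_to_K]
    exact Finset.sum_congr rfl fun _ _ => mul_comm _ _
  calc ‖star a ⬝ᵥ b‖ ^ 2 = ‖(inner ℂ a' b' : ℂ)‖ ^ 2 := by rw [hab]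
    _ ≤ (‖a'‖ * ‖b'‖) ^ 2 :=
        pow_le_pow_left₀ (norm_nonneg _) (norm_inner_le_norm a' b') 2
    _ = ‖a'‖ ^ 2 * ‖b'‖ ^ 2 := by ring
    _ = (star a ⬝ᵥ a).re * (star b ⬝ᵥ b).re := by
        rw [← inner_self_eq_norm_sq (𝕜 := ℂ) a', ← inner_self_eq_norm_sq (𝕜 := ℂ) b',
          haa, hbb]
        rfl

/-- Cauchy–Schwarz for a PSD sesquilinear form. -/
lemma sesq_cs {M : Matrix n n ℂ} (hM : M.PosSemidef) (w v : n → ℂ) :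
    ‖sesq w v M‖ ^ 2 ≤ (sesq w w M).re * (sesq v v M).re := by
  obtain ⟨B, rfl⟩ := (by open scoped MatrixOrder in exact CStarAlgebra.nonneg_iff_eq_star_mul_self.mp hM.nonneg)
  simp only [Matrix.star_eq_conjTranspose] at hM ⊢
  have key : ∀ u u' : n → ℂ, sesq u u' (Bᴴ * B) = star (B *ᵥ u) ⬝ᵥ (B *ᵥ u') := by
    intro u u'
    rw [sesq_apply, Matrix.star_mulVec, ← Matrix.dotProduct_mulVec, Matrix.mulVec_mulVec]
  rw [key, key, key]
  exact dot_cs _ _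

end MatrixSide

section Spectral

variable {n : Type*} [Fintype n] [DecidableEq n] {A : Matrix n n ℂ}

open Matrix

/-- Spectral projection-like pieces. -/
noncomputable def specProj (hA : A.IsHermitian) (i : n) : Matrix n n ℂ :=
  (hA.eigenvectorUnitary : Matrix n n ℂ) * Matrix.single i i 1 *
    star (hA.eigenvectorUnitary : Matrix n n ℂ)

lemma stdBasis_diag (i : n) :
    Matrix.single i i (1:ℂ) = diagonal (Pi.single i 1) := by
  ext j k
  rw [Matrix.single, Matrix.diagonal]
  simp only [Matrix.of_apply, Pi.single_apply]
  by_cases hjk : j = k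
  · subst hjk
    by_cases hij : i = j
    · subst hij; simp
    · simp [hij, Ne.symm hij]
  · have h2 : ¬ (i = j ∧ i = k) := by
      rintro ⟨rfl, rfl⟩; exact hjk rfl
    simp [hjk, h2]

lemma specProj_posSemidef (hA : A.IsHermitian) (i : n) : (specProj hA i).PosSemidef := by
  rw [specProj, stdBasis_diag, Matrix.star_eq_conjTranspose]
  refine Matrix.PosSemidef.mul_mul_conjTranspose_same ?_ _
  refine Matrix.PosSemidef.diagonal ?_
  intro j
  rcases eq_or_ne j i with rfl | hij
  · simpa using (zero_le_one : (0:ℂ) ≤ 1)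
  · simp [Pi.single_eq_of_ne hij]

lemma diagonal_eq_sum (d : n → ℂ) :
    diagonal d = ∑ i, d i • Matrix.single i i (1:ℂ) := by
  ext j k
  rw [Matrix.sum_apply]
  simp only [Matrix.smul_apply, Matrix.single, Matrix.of_apply, smul_eq_mul,
    mul_ite, mul_one, mul_zero, Matrix.diagonal]
  by_cases hjk : j = k
  · subst hjk
    rw [Finset.sum_eq_single j]
    · simp
    · intro b _ hb
      simp only [ite_eq_right_iff, and_imp]
      intro h1 h2; exact absurd h1 hb
    · simp
  · rw [Finset.sum_eq_zero]
    · simp [hjk]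
    · intro b _
      have : ¬ (b = j ∧ b = k) := by rintro ⟨rfl, rfl⟩; exact hjk rfl
      simp [this]

lemma sum_specProj (hA : A.IsHermitian) : ∑ i, specProj hA i = 1 := by
  have h1 : ∑ i, Matrix.single i i (1:ℂ) = (1 : Matrix n n ℂ) := by
    have h2 := diagonal_eq_sum (fun _ : n => (1:ℂ))
    simp only [one_smul] at h2
    rw [← h2, Matrix.diagonal_one]
  calc ∑ i, specProj hA i
      = (hA.eigenvectorUnitary : Matrix n n ℂ) * (∑ i, Matrix.single i i (1:ℂ)) *
        star (hA.eigenvectorUnitary : Matrix n n ℂ) := by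
        rw [Finset.mul_sum, Finset.sum_mul]
        rfl
    _ = 1 := by
        rw [h1, mul_one]
        exact Unitary.mul_star_self_of_mem (SetLike.coe_mem _)

lemma cfc_sum_rep (hA : A.IsHermitian) (f : ℝ → ℝ) :
    hA.cfc f = ∑ i, (f (hA.eigenvalues i) : ℂ) • specProj hA i := by
  rw [Matrix.IsHermitian.cfc, Unitary.conjStarAlgAut_apply]
  have : diagonal (RCLike.ofReal ∘ f ∘ hA.eigenvalues : n → ℂ)
      = ∑ i, (f (hA.eigenvalues i) : ℂ) • Matrix.single i i (1:ℂ) := by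
    rw [diagonal_eq_sum]
    rfl
  rw [this, Finset.mul_sum, Finset.sum_mul]
  congr 1
  ext i
  rw [Matrix.mul_smul, Matrix.smul_mul]
  rfl

/-- Push a linear functional through `hA.cfc`. -/
lemma map_hcfc (L : Matrix n n ℂ →ₗ[ℂ] ℂ) (hA : A.IsHermitian) (f : ℝ → ℝ) :
    L (hA.cfc f) = ∑ i, (f (hA.eigenvalues i) : ℂ) * L (specProj hA i) := by
  rw [cfc_sum_rep hA f, map_sum]
  congr 1
  ext i
  rw [LinearMap.map_smul, smul_eq_mul]

lemma re_sum_coe {ι : Type*} [Fintype ι] (r : ι → ℝ) (z : ι → ℂ) :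
    (∑ i, (r i : ℂ) * z i).re = ∑ i, r i * (z i).re := by
  rw [Complex.re_sum]
  congr 1
  ext i
  simp [Complex.mul_re]

end Spectral

section HcfcAlg

variable {n : Type*} [Fintype n] [DecidableEq n] {A : Matrix n n ℂ}

open Matrix

lemma hcfc_mul (hA : A.IsHermitian) (f g : ℝ → ℝ) :
    hA.cfc f * hA.cfc g = hA.cfc (fun x => f x * g x) := by
  simp only [Matrix.IsHermitian.cfc, Unitary.conjStarAlgAut_apply]
  have assoc : ∀ (a b c d e f : Matrix n n ℂ),
      (a * b * c) * (d * e * f) = a * (b * (c * d) * e) * f := by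
    intros; simp only [mul_assoc]
  rw [assoc, Unitary.star_mul_self_of_mem (SetLike.coe_mem _), mul_one,
    diagonal_mul_diagonal]
  have hfun : (fun i => ((RCLike.ofReal ∘ f ∘ hA.eigenvalues) i * (RCLike.ofReal ∘ g ∘ hA.eigenvalues) i : ℂ))
      = (RCLike.ofReal ∘ (fun x => f x * g x) ∘ hA.eigenvalues : n → ℂ) := by
    funext i
    simp [Function.comp]
  rw [hfun]

lemma hcfc_congr (hA : A.IsHermitian) {f g : ℝ → ℝ}
    (h : ∀ i, f (hA.eigenvalues i) = g (hA.eigenvalues i)) : hA.cfc f = hA.cfc g := by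
  simp only [Matrix.IsHermitian.cfc]
  have hfun : (RCLike.ofReal ∘ f ∘ hA.eigenvalues : n → ℂ)
      = (RCLike.ofReal ∘ g ∘ hA.eigenvalues : n → ℂ) := by
    funext i
    simp [Function.comp, h i]
  rw [hfun]

lemma hcfc_id (hA : A.IsHermitian) : hA.cfc (fun x => x) = A := by
  conv_rhs => rw [hA.spectral_theorem]
  rfl

lemma hcfc_one (hA : A.IsHermitian) : hA.cfc (fun _ => 1) = 1 := by
  rw [Matrix.IsHermitian.cfc, Unitary.conjStarAlgAut_apply]
  have : diagonal (RCLike.ofReal ∘ (fun _ : ℝ => (1:ℝ)) ∘ hA.eigenvalues : n → ℂ) = 1 := by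
    rw [← Matrix.diagonal_one]
    congr 1
  rw [this, mul_one]
  exact Unitary.mul_star_self_of_mem (SetLike.coe_mem _)

lemma hcfc_add (hA : A.IsHermitian) (f g : ℝ → ℝ) :
    hA.cfc (fun x => f x + g x) = hA.cfc f + hA.cfc g := by
  rw [cfc_sum_rep, cfc_sum_rep, cfc_sum_rep, ← Finset.sum_add_distrib]
  congr 1
  funext i
  rw [← add_smul]
  norm_cast

lemma hcfc_smul (hA : A.IsHermitian) (r : ℝ) (f : ℝ → ℝ) :
    hA.cfc (fun x => r * f x) = (r : ℂ) • hA.cfc f := by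
  rw [cfc_sum_rep, cfc_sum_rep, Finset.smul_sum]
  congr 1
  funext i
  rw [smul_smul]
  norm_cast

lemma hcfc_herm (hA : A.IsHermitian) (f : ℝ → ℝ) : (hA.cfc f).IsHermitian := by
  have hd : (diagonal (RCLike.ofReal ∘ f ∘ hA.eigenvalues : n → ℂ)).IsHermitian := by
    refine isHermitian_diagonal_of_self_adjoint _ ?_
    funext i
    simp [Function.comp, Pi.star_apply, Complex.conj_ofReal]
  have h2 := Matrix.isHermitian_conjTranspose_mul_mul
    (star (hA.eigenvectorUnitary : Matrix n n ℂ)) hd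
  rw [Matrix.IsHermitian.cfc, Unitary.conjStarAlgAut_apply]
  have h3 : (star (hA.eigenvectorUnitary : Matrix n n ℂ))ᴴ
      = (hA.eigenvectorUnitary : Matrix n n ℂ) := by
    rw [Matrix.star_eq_conjTranspose, Matrix.conjTranspose_conjTranspose]
  rwa [h3] at h2

lemma hcfc_posSemidef (hA : A.IsHermitian) {f : ℝ → ℝ}
    (h : ∀ i, 0 ≤ f (hA.eigenvalues i)) : (hA.cfc f).PosSemidef := by
  rw [Matrix.IsHermitian.cfc, Unitary.conjStarAlgAut_apply, Matrix.star_eq_conjTranspose]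
  refine Matrix.PosSemidef.mul_mul_conjTranspose_same (Matrix.PosSemidef.diagonal ?_) _
  intro i
  simpa [Function.comp] using Complex.zero_le_real.2 (h i)

end HcfcAlg

section PosDefHelpers

open Matrix

variable {n : Type*} [Fintype n] [DecidableEq n] {A : Matrix n n ℂ}

lemma hcfc_const (hA : A.IsHermitian) (r : ℝ) : hA.cfc (fun _ => r) = (r : ℂ) • 1 := by
  have h : (fun _ : ℝ => r) = fun x : ℝ => r * 1 := by funext; ring
  rw [h, hcfc_smul, hcfc_one]

lemma posdef_conj {M G : Matrix n n ℂ} (hM : M.PosDef) (hG : G.IsHermitian)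
    {G' : Matrix n n ℂ} (hGG' : G' * G = 1) : (G * M * G).PosDef := by
  refine Matrix.PosDef.of_dotProduct_mulVec_pos ?_ ?_
  · nth_rewrite 1 [← hG.eq]
    exact Matrix.isHermitian_conjTranspose_mul_mul G hM.1
  · intro v hv
    have hGv : G *ᵥ v ≠ 0 := by
      intro h
      apply hv
      calc v = (G' * G) *ᵥ v := by rw [hGG', Matrix.one_mulVec]
        _ = G' *ᵥ (G *ᵥ v) := by rw [Matrix.mulVec_mulVec]
        _ = 0 := by rw [h, Matrix.mulVec_zero]
    have := hM.dotProduct_mulVec_pos hGv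
    have h2 : sesq (G *ᵥ v) (G *ᵥ v) M = sesq v v (G * M * G) := sesq_conj hG v M
    rw [sesq_apply, sesq_apply] at h2
    rwa [← h2]

variable {m : Type*} [Fintype m] [DecidableEq m]

lemma posdef_map (Ψ : Matrix n n ℂ → Matrix m m ℂ) (hlin : IsLinearMap ℂ Ψ)
    (hunital : Ψ 1 = 1) (hpos : ∀ X : Matrix n n ℂ, X.PosSemidef → (Ψ X).PosSemidef)
    {T : Matrix n n ℂ} (hT : T.PosDef) : (Ψ T).PosDef := by
  have hTH := hT.1
  have hpsd := hpos T hT.posSemidef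
  refine Matrix.PosDef.of_dotProduct_mulVec_pos hpsd.1 fun v hv => ?_
  set L := (sesq v v).comp (IsLinearMap.mk' Ψ hlin) with hLdef
  set μ := hTH.eigenvalues with hμdef
  set c := fun i => (L (specProj hTH i)).re with hcdef
  have hci : ∀ i, 0 ≤ c i := fun i =>
    psd_sesq_nonneg (hpos _ (specProj_posSemidef hTH i)) v
  have hvpos : 0 < star v ⬝ᵥ v := Matrix.dotProduct_star_self_pos_iff.2 hv
  have hsum : ∑ i, c i = (star v ⬝ᵥ v).re := by
    have h2 := map_hcfc L hTH (fun _ => 1)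
    rw [hcfc_one] at h2
    simp only [Complex.ofReal_one, one_mul] at h2
    have h3 : L (1 : Matrix n n ℂ) = star v ⬝ᵥ v := by
      show sesq v v (Ψ 1) = _
      rw [hunital, sesq_one]
    rw [h3] at h2
    rw [hcdef, ← Complex.re_sum, ← h2]
  have hre : (sesq v v (Ψ T)).re = ∑ i, μ i * c i := by
    have h4 := map_hcfc L hTH (fun x => x)
    rw [hcfc_id] at h4
    have h5 : L T = sesq v v (Ψ T) := rfl
    rw [h5] at h4
    rw [h4, re_sum_coe]
  have hrepos : 0 < (sesq v v (Ψ T)).re := by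
    rw [hre]
    have hterm : ∀ i ∈ Finset.univ, 0 ≤ μ i * c i := fun i _ =>
      mul_nonneg (hT.eigenvalues_pos i).le (hci i)
    rcases (Finset.sum_nonneg hterm).eq_or_lt with he | hl
    · exfalso
      have hzero : ∀ i ∈ Finset.univ, μ i * c i = 0 :=
        (Finset.sum_eq_zero_iff_of_nonneg hterm).1 he.symm
      have hc0 : ∀ i, c i = 0 := by
        intro i
        have := hzero i (Finset.mem_univ i)
        have hμi := hT.eigenvalues_pos i
        rcases mul_eq_zero.1 this with h | h
        · exact absurd h hμi.ne'
        · exact h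
      have : ∑ i, c i = 0 := Finset.sum_eq_zero fun i _ => hc0 i
      rw [hsum] at this
      rw [Complex.lt_def] at hvpos
      simp only [Complex.zero_re] at hvpos
      linarith [hvpos.1, this.ge.trans_eq rfl]
    · exact hl
  have him : (sesq v v (Ψ T)).im = 0 := by
    have h0 := hpsd.dotProduct_mulVec_nonneg v
    rw [Complex.le_def] at h0
    exact h0.2.symm
  show 0 < star v ⬝ᵥ (Ψ T) *ᵥ v
  rw [Complex.lt_def]
  exact ⟨by simpa [sesq_apply] using hrepos, by simpa [sesq_apply] using him.symm⟩

end PosDefHelpers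

section Choi

open Matrix

variable {n : Type*} [Fintype n] [DecidableEq n]
variable {m : Type*} [Fintype m] [DecidableEq m]

set_option maxHeartbeats 2000000 in
lemma choi_step (Ψ : Matrix n n ℂ → Matrix m m ℂ) (hlin : IsLinearMap ℂ Ψ)
    (hunital : Ψ 1 = 1) (hpos : ∀ X : Matrix n n ℂ, X.PosSemidef → (Ψ X).PosSemidef)
    {T : Matrix n n ℂ} (hT : T.PosDef) (hN : (Ψ T).PosDef)
    {lam : ℝ} (hlam : 0 < lam) (v : m → ℂ) :
    (sesq v v ((hN.1).cfc (fun x : ℝ => (x + lam)⁻¹))).re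
      ≤ (sesq v v (Ψ ((hT.1).cfc (fun x : ℝ => (x + lam)⁻¹)))).re := by
  set hTH := hT.1 with hTHdef
  set hNH := hN.1 with hNHdef
  set g : ℝ → ℝ := fun x => (x + lam)⁻¹ with hgdef
  set G : Matrix m m ℂ := hNH.cfc g with hGdef
  have hGH : G.IsHermitian := hcfc_herm hNH g
  set w : m → ℂ := G *ᵥ v with hwdef
  set μ := hTH.eigenvalues with hμdef
  have hμpos : ∀ i, 0 < μ i := hT.eigenvalues_pos
  have hνpos : ∀ j, 0 < hNH.eigenvalues j := hN.eigenvalues_pos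
  set Lv := (sesq v v).comp (IsLinearMap.mk' Ψ hlin) with hLv
  set Lwv := (sesq w v).comp (IsLinearMap.mk' Ψ hlin) with hLwv
  set Lww := (sesq w w).comp (IsLinearMap.mk' Ψ hlin) with hLww
  set c := fun i => (Lv (specProj hTH i)).re with hcdef
  set x := fun i => (Lww (specProj hTH i)).re with hxdef
  set b := fun i => Lwv (specProj hTH i) with hbdef
  have hpsdE : ∀ i, (Ψ (specProj hTH i)).PosSemidef :=
    fun i => hpos _ (specProj_posSemidef hTH i)
  have hc : ∀ i, 0 ≤ c i := fun i => psd_sesq_nonneg (hpsdE i) v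
  have hx : ∀ i, 0 ≤ x i := fun i => psd_sesq_nonneg (hpsdE i) w
  have hb : ∀ i, ‖b i‖ ^ 2 ≤ x i * c i := fun i => sesq_cs (hpsdE i) w v
  have hGpsd : G.PosSemidef := by
    refine hcfc_posSemidef hNH ?_
    intro j
    have := hνpos j
    rw [hgdef]
    positivity
  set R := (sesq v v G).re with hRdef
  have hR0 : 0 ≤ R := psd_sesq_nonneg hGpsd v
  -- RHS in sum form
  have hS : (sesq v v (Ψ (hTH.cfc g))).re = ∑ i, g (μ i) * c i := by
    have h1 := map_hcfc Lv hTH g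
    have h2 : Lv (hTH.cfc g) = sesq v v (Ψ (hTH.cfc g)) := rfl
    rw [h2] at h1
    rw [h1, re_sum_coe]
  set S := (sesq v v (Ψ (hTH.cfc g))).re with hSdef
  have hS0 : 0 ≤ S := by
    rw [hS]
    refine Finset.sum_nonneg fun i _ => mul_nonneg ?_ (hc i)
    have := hμpos i
    rw [hgdef]
    positivity
  -- (I1)+(I2): ∑ b = sesq v v G
  have hI1 : ∑ i, b i = sesq v v G := by
    have h1 := map_hcfc Lwv hTH (fun _ => 1)
    rw [hcfc_one] at h1
    simp only [Complex.ofReal_one, one_mul] at h1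
    have h2 : Lwv (1 : Matrix n n ℂ) = sesq w v (1 : Matrix m m ℂ) := by
      show sesq w v (Ψ 1) = _
      rw [hunital]
    have h3 : sesq w v (1 : Matrix m m ℂ) = sesq v v G := by
      have h4 := sesq_mulVec_left hGH v v (1 : Matrix m m ℂ)
      rw [mul_one] at h4
      exact h4
    rw [h2, h3] at h1
    exact h1.symm
  have hRb : R = ∑ i, (b i).re := by
    rw [hRdef, ← hI1, Complex.re_sum]
  -- (I3): ∑ (μ i + lam) * x i = R
  have hI3 : ∑ i, (μ i + lam) * x i = R := by
    have h1 := map_hcfc Lww hTH (fun x => x + lam)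
    have h2 : hTH.cfc (fun x => x + lam) = T + (lam : ℂ) • 1 := by
      rw [hcfc_add hTH (fun x => x) (fun _ => lam), hcfc_id, hcfc_const]
    have h3 : Lww (hTH.cfc (fun x => x + lam)) = sesq v v G := by
      rw [h2]
      have h4 : Lww (T + (lam : ℂ) • 1) = sesq w w (Ψ T) + (lam : ℂ) * sesq w w (Ψ 1) := by
        rw [map_add, LinearMap.map_smul, smul_eq_mul]
        rfl
      rw [h4, hunital]
      have h5 : sesq w w (Ψ T) = sesq v v (G * (Ψ T) * G) := by
        rw [hwdef, sesq_conj hGH]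
      have h6 : sesq w w (1 : Matrix m m ℂ) = sesq v v (G * 1 * G) := by
        rw [hwdef, sesq_conj hGH]
      rw [h5, h6, mul_one]
      have h7 : G * (Ψ T) * G = hNH.cfc (fun y => g y * y * g y) := by
        conv_lhs => rw [hGdef]
        nth_rewrite 2 [show Ψ T = hNH.cfc (fun y => y) from (hcfc_id hNH).symm]
        rw [hcfc_mul, hcfc_mul]
      have h8 : G * G = hNH.cfc (fun y => g y * g y) := by
        conv_lhs => rw [hGdef]
        rw [hcfc_mul]
      rw [h7, h8]
      have h9 : sesq v v (hNH.cfc fun y => g y * y * g y)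
            + (lam:ℂ) * sesq v v (hNH.cfc fun y => g y * g y)
          = sesq v v (hNH.cfc fun y => (g y * y * g y) + lam * (g y * g y)) := by
        rw [hcfc_add hNH (fun y => g y * y * g y) (fun y => lam * (g y * g y)),
          hcfc_smul hNH lam (fun y => g y * g y), map_add, LinearMap.map_smul, smul_eq_mul]
      rw [h9]
      congr 1
      apply hcfc_congr
      intro j
      have hν := hνpos j
      have hne : hNH.eigenvalues j + lam ≠ 0 := by positivity
      rw [hgdef]
      field_simp
    rw [h3] at h1
    have := congrArg Complex.re h1
    rw [re_sum_coe] at this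
    rw [← this, hRdef]
  -- Cauchy-Schwarz chain
  have hchain : R ≤ Real.sqrt R * Real.sqrt S := by
    have step1 : R ≤ ∑ i, Real.sqrt ((μ i + lam) * x i) * Real.sqrt (g (μ i) * c i) := by
      rw [hRb]
      refine Finset.sum_le_sum fun i _ => ?_
      have h1 : (b i).re ≤ ‖b i‖ := Complex.re_le_norm (b i)
      have h2 : ‖b i‖ ≤ Real.sqrt (x i * c i) := by
        have := Real.sqrt_le_sqrt (hb i)
        rwa [Real.sqrt_sq (norm_nonneg _)] at this
      have h3 : Real.sqrt ((μ i + lam) * x i) * Real.sqrt (g (μ i) * c i)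
          = Real.sqrt (x i * c i) := by
        have hμl : 0 < μ i + lam := by have := hμpos i; linarith
        rw [Real.sqrt_mul hμl.le, Real.sqrt_mul (by rw [hgdef]; positivity : 0 ≤ g (μ i))]
        have : Real.sqrt (μ i + lam) * Real.sqrt (g (μ i)) = 1 := by
          rw [← Real.sqrt_mul hμl.le, hgdef]
          rw [mul_inv_cancel₀ hμl.ne', Real.sqrt_one]
        calc Real.sqrt (μ i + lam) * Real.sqrt (x i) * (Real.sqrt (g (μ i)) * Real.sqrt (c i))
            = (Real.sqrt (μ i + lam) * Real.sqrt (g (μ i))) * (Real.sqrt (x i) * Real.sqrt (c i)) := by ring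
          _ = Real.sqrt (x i) * Real.sqrt (c i) := by rw [this, one_mul]
          _ = Real.sqrt (x i * c i) := (Real.sqrt_mul (hx i) _).symm
      rw [h3]
      exact h1.trans h2
    have step2 : ∑ i, Real.sqrt ((μ i + lam) * x i) * Real.sqrt (g (μ i) * c i)
        ≤ Real.sqrt (∑ i, (μ i + lam) * x i) * Real.sqrt (∑ i, g (μ i) * c i) := by
      refine Real.sum_sqrt_mul_sqrt_le _ (fun i => ?_) (fun i => ?_)
      · have := hμpos i
        exact mul_nonneg (by linarith) (hx i)
      · exact mul_nonneg (by rw [hgdef]; have := hμpos i; positivity) (hc i)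
    calc R ≤ _ := step1
      _ ≤ _ := step2
      _ = Real.sqrt R * Real.sqrt S := by rw [hI3, ← hS]
  -- conclude
  show R ≤ S
  nlinarith [sq_nonneg (Real.sqrt R - Real.sqrt S), Real.sq_sqrt hR0, Real.sq_sqrt hS0,
    Real.sqrt_nonneg R, Real.sqrt_nonneg S]

end Choi

section Jensen

open Matrix

variable {n : Type*} [Fintype n] [DecidableEq n]
variable {m : Type*} [Fintype m] [DecidableEq m]

set_option maxHeartbeats 2000000 in
lemma jensen (Ψ : Matrix n n ℂ → Matrix m m ℂ) (hlin : IsLinearMap ℂ Ψ)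
    (hunital : Ψ 1 = 1) (hpos : ∀ X : Matrix n n ℂ, X.PosSemidef → (Ψ X).PosSemidef)
    {T : Matrix n n ℂ} (hT : T.PosDef) {α : ℝ} (h0 : 0 ≤ α) (h1 : α ≤ 1) :
    (cfc (fun x : ℝ => x ^ α) (Ψ T) - Ψ (cfc (fun x : ℝ => x ^ α) T)).PosSemidef := by
  have hN : (Ψ T).PosDef := posdef_map Ψ hlin hunital hpos hT
  rw [(hT.1).cfc_eq, (hN.1).cfc_eq]
  rcases eq_or_lt_of_le h0 with hz | h0'
  · have hfun : (fun x : ℝ => x ^ α) = fun _ : ℝ => (1:ℝ) := by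
      funext y
      rw [← hz, Real.rpow_zero]
    rw [hfun, hcfc_one, hcfc_one, hunital, sub_self]
    exact Matrix.PosSemidef.zero
  rcases eq_or_lt_of_le h1 with ho | h1'
  · have hfun : (fun x : ℝ => x ^ α) = fun y : ℝ => y := by
      funext y
      rw [ho, Real.rpow_one]
    rw [hfun, hcfc_id, hcfc_id, sub_self]
    exact Matrix.PosSemidef.zero
  have hpowpos : ∀ i, 0 ≤ (fun x : ℝ => x ^ α) (hT.1.eigenvalues i) :=
    fun i => Real.rpow_nonneg (hT.eigenvalues_pos i).le α
  refine posSemidef_of_sesq (Matrix.IsHermitian.sub (hcfc_herm hN.1 _)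
    (hpos _ (hcfc_posSemidef hT.1 hpowpos)).1) ?_
  intro v
  set Lv := (sesq v v).comp (IsLinearMap.mk' Ψ hlin) with hLv
  set c := fun i => (Lv (specProj hT.1 i)).re with hcdef
  set d := fun j => ((sesq v v) (specProj hN.1 j)).re with hddef
  have hc : ∀ i, 0 ≤ c i := fun i =>
    psd_sesq_nonneg (hpos _ (specProj_posSemidef hT.1 i)) v
  have hd : ∀ j, 0 ≤ d j := fun j =>
    psd_sesq_nonneg (specProj_posSemidef hN.1 j) v
  have hsum : ∑ i, c i = ∑ j, d j := by
    have e1 := map_hcfc Lv hT.1 (fun _ => 1)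
    have e2 := map_hcfc (sesq v v) hN.1 (fun _ => 1)
    rw [hcfc_one] at e1 e2
    simp only [Complex.ofReal_one, one_mul] at e1 e2
    have e3 : Lv (1 : Matrix n n ℂ) = sesq v v (1 : Matrix m m ℂ) := by
      show sesq v v (Ψ 1) = _
      rw [hunital]
    rw [e3, e2] at e1
    have := congrArg Complex.re e1
    rw [Complex.re_sum, Complex.re_sum] at this
    exact this.symm
  have hkey : ∀ l : ℝ, 0 < l →
      ∑ j, d j * (hN.1.eigenvalues j + l)⁻¹ ≤ ∑ i, c i * (hT.1.eigenvalues i + l)⁻¹ := by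
    intro l hl
    have hchoi := choi_step Ψ hlin hunital hpos hT hN hl v
    have e1 := map_hcfc (sesq v v) hN.1 (fun x => (x + l)⁻¹)
    have e2 := map_hcfc Lv hT.1 (fun x => (x + l)⁻¹)
    have e1' := congrArg Complex.re e1
    have e2' := congrArg Complex.re e2
    rw [re_sum_coe] at e1' e2'
    rw [e1'] at hchoi
    have e2'' : ((sesq v v) (Ψ (hT.1.cfc fun x => (x + l)⁻¹))).re
        = ∑ i, (hT.1.eigenvalues i + l)⁻¹ * c i := e2'
    rw [e2''] at hchoi
    calc ∑ j, d j * (hN.1.eigenvalues j + l)⁻¹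
        = ∑ j, (hN.1.eigenvalues j + l)⁻¹ * d j :=
          Finset.sum_congr rfl fun j _ => mul_comm _ _
      _ ≤ ∑ i, (hT.1.eigenvalues i + l)⁻¹ * c i := hchoi
      _ = ∑ i, c i * (hT.1.eigenvalues i + l)⁻¹ :=
          Finset.sum_congr rfl fun i _ => mul_comm _ _
  have hcore := scalar_core h0' h1' hT.1.eigenvalues hN.1.eigenvalues c d
    hT.eigenvalues_pos hN.eigenvalues_pos hc hd hsum hkey
  -- convert goal
  have e1 := map_hcfc (sesq v v) hN.1 (fun x => x ^ α)
  have e2 := map_hcfc Lv hT.1 (fun x => x ^ α)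
  have e1' := congrArg Complex.re e1
  have e2' := congrArg Complex.re e2
  rw [re_sum_coe] at e1' e2'
  rw [map_sub]
  rw [Complex.sub_re]
  have e3 : (sesq v v (Ψ (hT.1.cfc fun x => x ^ α))).re
      = ∑ i, (hT.1.eigenvalues i) ^ α * c i := e2'
  rw [e1', e3]
  have h4 : ∑ i, c i * hT.1.eigenvalues i ^ α
      = ∑ i, (hT.1.eigenvalues i) ^ α * c i :=
    Finset.sum_congr rfl fun i _ => mul_comm _ _
  have h5 : ∑ j, d j * hN.1.eigenvalues j ^ α
      = ∑ j, (hN.1.eigenvalues j) ^ α * d j :=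
    Finset.sum_congr rfl fun j _ => mul_comm _ _
  rw [h4, h5] at hcore
  linarith

end Jensen

section SqrtLemmas

open Matrix

variable {n : Type*} [Fintype n] [DecidableEq n] {M : Matrix n n ℂ}

lemma sqrt_mul_inv_sqrt (hM : M.PosDef) :
    hM.1.cfc Real.sqrt * hM.1.cfc (fun x => (Real.sqrt x)⁻¹) = 1 := by
  rw [hcfc_mul]
  rw [hcfc_congr hM.1 (g := fun _ => 1) fun i =>
    mul_inv_cancel₀ (ne_of_gt (Real.sqrt_pos.2 (hM.eigenvalues_pos i)))]
  exact hcfc_one hM.1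

lemma inv_sqrt_mul_sqrt (hM : M.PosDef) :
    hM.1.cfc (fun x => (Real.sqrt x)⁻¹) * hM.1.cfc Real.sqrt = 1 := by
  rw [hcfc_mul]
  rw [hcfc_congr hM.1 (g := fun _ => 1) fun i =>
    inv_mul_cancel₀ (ne_of_gt (Real.sqrt_pos.2 (hM.eigenvalues_pos i)))]
  exact hcfc_one hM.1

lemma sqrt_mul_sqrt (hM : M.PosDef) :
    hM.1.cfc Real.sqrt * hM.1.cfc Real.sqrt = M := by
  rw [hcfc_mul]
  rw [hcfc_congr hM.1 (g := fun y => y) fun i =>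
    Real.mul_self_sqrt (hM.eigenvalues_pos i).le]
  exact hcfc_id hM.1

lemma inv_sqrt_conj (hM : M.PosDef) :
    hM.1.cfc (fun x => (Real.sqrt x)⁻¹) * M * hM.1.cfc (fun x => (Real.sqrt x)⁻¹) = 1 := by
  set R := hM.1.cfc (fun x => (Real.sqrt x)⁻¹) with hR
  rw [show M = hM.1.cfc (fun y => y) from (hcfc_id hM.1).symm, hR]
  rw [hcfc_mul, hcfc_mul]
  rw [hcfc_congr hM.1 (g := fun _ => 1) ?_]
  · exact hcfc_one hM.1
  · intro i
    have hp := hM.eigenvalues_pos i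
    have hs : Real.sqrt (hM.1.eigenvalues i) ≠ 0 := ne_of_gt (Real.sqrt_pos.2 hp)
    have : hM.1.eigenvalues i = Real.sqrt (hM.1.eigenvalues i) * Real.sqrt (hM.1.eigenvalues i) :=
      (Real.mul_self_sqrt hp.le).symm
    rw [this]
    field_simp
    rw [Real.sqrt_sq (Real.sqrt_nonneg _)]

end SqrtLemmas

end AndoAux

open Matrix AndoAux in
set_option maxHeartbeats 2000000 in
/-- Ando's inequality: a unital positive linear map `Φ` satisfies
`Φ(A #_α B) ≤ Φ(A) #_α Φ(B)` for positive definite `A, B` and `α ∈ [0,1]`. -/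
theorem positive_linear_map_weighted_geometric_mean
    (N K : ℕ) (Φ : Matrix (Fin N) (Fin N) ℂ → Matrix (Fin K) (Fin K) ℂ)
    (hlin : IsLinearMap ℂ Φ) (hunital : Φ 1 = 1)
    (hpos : ∀ A : Matrix (Fin N) (Fin N) ℂ, A.PosSemidef → (Φ A).PosSemidef)
    (A B : Matrix (Fin N) (Fin N) ℂ) (hA : A.PosDef) (hB : B.PosDef)
    (α : ℝ) (hα : 0 ≤ α) (hα1 : α ≤ 1) :
    (wgm α (Φ A) (Φ B) - Φ (wgm α A B)).PosSemidef := by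
  have hCA : (Φ A).PosDef := posdef_map Φ hlin hunital hpos hA
  -- translate `rsqrt`/`risqrt` into the concrete Hermitian cfc
  have hrsA : rsqrt A = hA.1.cfc Real.sqrt := by rw [rsqrt, Matrix.IsHermitian.cfc_eq]
  have hriA : risqrt A = hA.1.cfc (fun x => (Real.sqrt x)⁻¹) := by
    rw [risqrt, Matrix.IsHermitian.cfc_eq]
  have hrsC : rsqrt (Φ A) = hCA.1.cfc Real.sqrt := by rw [rsqrt, Matrix.IsHermitian.cfc_eq]
  have hriC : risqrt (Φ A) = hCA.1.cfc (fun x => (Real.sqrt x)⁻¹) := by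
    rw [risqrt, Matrix.IsHermitian.cfc_eq]
  have hrsAH : (rsqrt A).IsHermitian := by rw [hrsA]; exact hcfc_herm _ _
  have hriAH : (risqrt A).IsHermitian := by rw [hriA]; exact hcfc_herm _ _
  have hrsCH : (rsqrt (Φ A)).IsHermitian := by rw [hrsC]; exact hcfc_herm _ _
  have hriCH : (risqrt (Φ A)).IsHermitian := by rw [hriC]; exact hcfc_herm _ _
  -- product identities
  have h1A : rsqrt A * risqrt A = 1 := by rw [hrsA, hriA]; exact sqrt_mul_inv_sqrt hA
  have h2A : risqrt A * rsqrt A = 1 := by rw [hrsA, hriA]; exact inv_sqrt_mul_sqrt hA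
  have h3A : rsqrt A * rsqrt A = A := by rw [hrsA]; exact sqrt_mul_sqrt hA
  have h1C : rsqrt (Φ A) * risqrt (Φ A) = 1 := by rw [hrsC, hriC]; exact sqrt_mul_inv_sqrt hCA
  have h2C : risqrt (Φ A) * rsqrt (Φ A) = 1 := by rw [hrsC, hriC]; exact inv_sqrt_mul_sqrt hCA
  have h4C : risqrt (Φ A) * Φ A * risqrt (Φ A) = 1 := by rw [hriC]; exact inv_sqrt_conj hCA
  -- T and Ψ
  set T : Matrix (Fin N) (Fin N) ℂ := risqrt A * B * risqrt A with hTdef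
  have hTpd : T.PosDef := posdef_conj hB hriAH h1A
  set Ψ : Matrix (Fin N) (Fin N) ℂ → Matrix (Fin K) (Fin K) ℂ :=
    fun X => risqrt (Φ A) * Φ (rsqrt A * X * rsqrt A) * risqrt (Φ A) with hΨdef
  have hΨlin : IsLinearMap ℂ Ψ := by
    constructor
    · intro X Y
      show risqrt (Φ A) * Φ (rsqrt A * (X + Y) * rsqrt A) * risqrt (Φ A) = _
      rw [mul_add, add_mul, hlin.map_add, mul_add, add_mul]
    · intro cc X
      show risqrt (Φ A) * Φ (rsqrt A * (cc • X) * rsqrt A) * risqrt (Φ A) = _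
      rw [mul_smul_comm, smul_mul_assoc, hlin.map_smul, mul_smul_comm, smul_mul_assoc]
  have hΨ1 : Ψ 1 = 1 := by
    show risqrt (Φ A) * Φ (rsqrt A * 1 * rsqrt A) * risqrt (Φ A) = 1
    rw [mul_one, h3A]
    exact h4C
  have hΨpos : ∀ X : Matrix (Fin N) (Fin N) ℂ, X.PosSemidef → (Ψ X).PosSemidef := by
    intro X hX
    show (risqrt (Φ A) * Φ (rsqrt A * X * rsqrt A) * risqrt (Φ A)).PosSemidef
    have h1 : (rsqrt A * X * rsqrt A).PosSemidef := by
      rw [show rsqrt A * X * rsqrt A = rsqrt A * X * (rsqrt A)ᴴ by rw [hrsAH.eq]]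
      exact hX.mul_mul_conjTranspose_same _
    have h2 := hpos _ h1
    rw [show risqrt (Φ A) * Φ (rsqrt A * X * rsqrt A) * risqrt (Φ A)
        = risqrt (Φ A) * Φ (rsqrt A * X * rsqrt A) * (risqrt (Φ A))ᴴ by rw [hriCH.eq]]
    exact h2.mul_mul_conjTranspose_same _
  -- Ψ T = risqrt C * Φ B * risqrt C
  have hTmid : rsqrt A * T * rsqrt A = B := by
    rw [hTdef]
    have h : rsqrt A * (risqrt A * B * risqrt A) * rsqrt A
        = rsqrt A * risqrt A * B * (risqrt A * rsqrt A) := by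
      simp only [mul_assoc]
    rw [h, h1A, one_mul, h2A, mul_one]
  have hNeq : Ψ T = risqrt (Φ A) * Φ B * risqrt (Φ A) := by
    show risqrt (Φ A) * Φ (rsqrt A * T * rsqrt A) * risqrt (Φ A) = _
    rw [hTmid]
  -- main inequality
  have hJ := jensen Ψ hΨlin hΨ1 hΨpos hTpd hα hα1
  -- rewrite goal
  have E1 : wgm α (Φ A) (Φ B)
      = rsqrt (Φ A) * cfc (fun x : ℝ => x ^ α) (Ψ T) * rsqrt (Φ A) := by
    rw [wgm, hNeq]
  have E2 : Φ (wgm α A B)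
      = rsqrt (Φ A) * Ψ (cfc (fun x : ℝ => x ^ α) T) * rsqrt (Φ A) := by
    have h5 : Ψ (cfc (fun x : ℝ => x ^ α) T)
        = risqrt (Φ A) * Φ (rsqrt A * cfc (fun x : ℝ => x ^ α) T * rsqrt A) * risqrt (Φ A) := rfl
    rw [h5]
    have h6 : rsqrt (Φ A) *
        (risqrt (Φ A) * Φ (rsqrt A * cfc (fun x : ℝ => x ^ α) T * rsqrt A) * risqrt (Φ A)) *
        rsqrt (Φ A)
        = (rsqrt (Φ A) * risqrt (Φ A)) * Φ (rsqrt A * cfc (fun x : ℝ => x ^ α) T * rsqrt A) *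
          (risqrt (Φ A) * rsqrt (Φ A)) := by
      simp only [mul_assoc]
    rw [h6, h1C, one_mul, h2C, mul_one]
    rfl
  rw [E1, E2]
  have E3 : rsqrt (Φ A) * cfc (fun x : ℝ => x ^ α) (Ψ T) * rsqrt (Φ A)
      - rsqrt (Φ A) * Ψ (cfc (fun x : ℝ => x ^ α) T) * rsqrt (Φ A)
      = rsqrt (Φ A) * (cfc (fun x : ℝ => x ^ α) (Ψ T) - Ψ (cfc (fun x : ℝ => x ^ α) T)) *
        rsqrt (Φ A) := by
    rw [mul_sub, sub_mul]
  rw [E3]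
  have := hJ.mul_mul_conjTranspose_same (rsqrt (Φ A))
  rwa [hrsCH.eq] at this
end
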